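/- arXiv:1703.09401 — 7 statements merged into one kernel-verified Lean document; each statement's English description precedes it below -/
import Mathlib

section
/- Let H be the diagonal matrix of size 2^m with entries H_{I,I} as in the Lauricella F_C intersection matrix, P_m the Kronecker product of the matrices Q_k = [[1-γ_k,1],[0,1]], and let H̃ = ᵗP_m · H · P_m^∨ where P_m^∨ is P_m with each γ_k replaced by γ_k^{-1}. Then det(H̃) = ∏_{I∈{0,1}^m}(α - ∏_k γ_k^{i_k})(β - ∏_k γ_k^{i_k}) / ((α - ∏_k γ_k)^{2^m} (β-1)^{2^m}). In particular, H̃ is invertible under the condition that α - ∏_k γ_k^{i_k} ≠ 0 and β - ∏_k γ_k^{i_k} ≠ 0 for all I. -/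
open Matrix

/-- The diagonal entry `H_{I,I}` of the intersection matrix for Lauricella's `F_C`. -/
noncomputable def Hentry (m : ℕ) (α β : ℂ) (γ : Fin m → ℂ) (I : Fin m → Fin 2) : ℂ :=
  (∏ k, (-1 : ℂ) ^ (I k : ℕ) * γ k ^ (1 - (I k : ℕ)) / (γ k - 1)) *
    ((α - ∏ k, γ k ^ (I k : ℕ)) * (β - ∏ k, γ k ^ (I k : ℕ)) /
      ((α - ∏ k, γ k) * (β - 1)))

/-- The Kronecker product `P_m = Q_1 ⊗ ⋯ ⊗ Q_m` with `Q_k = [[1-γ_k,1],[0,1]]`,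
realized entrywise on the index type `Fin m → Fin 2`. -/
def Pmat (m : ℕ) (γ : Fin m → ℂ) : Matrix (Fin m → Fin 2) (Fin m → Fin 2) ℂ :=
  Matrix.of fun I J => ∏ k, (!![1 - γ k, 1; 0, 1] : Matrix (Fin 2) (Fin 2) ℂ) (I k) (J k)

open Kronecker

def finSuccEquiv2 (n : ℕ) : (Fin (n+1) → Fin 2) ≃ Fin 2 × (Fin n → Fin 2) where
  toFun I := (I 0, fun k => I k.succ)
  invFun p := Fin.cons p.1 p.2
  left_inv I := Fin.cons_self_tail I
  right_inv p := by simp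

lemma detProdMat : ∀ (m : ℕ) (A : Fin m → Matrix (Fin 2) (Fin 2) ℂ),
    (Matrix.of fun I J : Fin m → Fin 2 => ∏ k, A k (I k) (J k)).det
      = ∏ k, (A k).det ^ 2 ^ (m - 1) := by
  intro m
  induction m with
  | zero => intro A; simp [Matrix.det_unique]
  | succ n ih =>
    intro A
    have key : (Matrix.of fun I J : Fin (n+1) → Fin 2 => ∏ k, A k (I k) (J k))
        = ((A 0 ⊗ₖ Matrix.of fun I J : Fin n → Fin 2 => ∏ k, A k.succ (I k) (J k)).submatrix
            (finSuccEquiv2 n) (finSuccEquiv2 n)) := by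
      ext I J
      simp [finSuccEquiv2, Fin.prod_univ_succ]
      rfl
    rw [key, Matrix.det_submatrix_equiv_self, Matrix.det_kronecker, ih]
    simp only [Fintype.card_pi, Fintype.card_fin, Finset.prod_const, Finset.card_univ]
    rw [Fin.prod_univ_succ]
    cases n with
    | zero => simp
    | succ p =>
      rw [← Finset.prod_pow]
      simp only [Nat.add_sub_cancel, ← pow_mul, ← pow_succ]

lemma prodPi : ∀ (m : ℕ) (f : Fin m → Fin 2 → ℂ),
    (∏ I : Fin m → Fin 2, ∏ k, f k (I k)) = ∏ k, (f k 0 * f k 1) ^ 2 ^ (m - 1) := by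
  intro m
  induction m with
  | zero => simp
  | succ n ih =>
    intro f
    rw [← Equiv.prod_comp (finSuccEquiv2 n).symm (fun I => ∏ k, f k (I k))]
    rw [Fintype.prod_prod_type]
    have hcons : ∀ (j : Fin 2) (I : Fin n → Fin 2),
        (∏ k, f k (((finSuccEquiv2 n).symm (j, I)) k))
          = f 0 j * ∏ k, f k.succ (I k) := by
      intro j I
      rw [Fin.prod_univ_succ]
      simp [finSuccEquiv2]
      rfl
    simp only [hcons]
    rw [Fin.prod_univ_succ]
    simp only [Finset.prod_mul_distrib, Finset.prod_const, Finset.card_univ,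
      Fintype.card_pi, Fintype.card_fin]
    rw [ih]
    cases n with
    | zero => simp
    | succ p =>
      simp only [Fin.prod_univ_one, pow_one, Nat.add_sub_cancel, Fin.succ_zero_eq_one]
      rw [Fin.prod_univ_succ (fun k => (f k 0 * f k 1) ^ 2 ^ (p + 1))]
      set X := ∏ k : Fin (p+1), (f k.succ 0 * f k.succ 1) ^ 2 ^ p with hXdef
      have hX : X * X = ∏ k : Fin (p+1), (f k.succ 0 * f k.succ 1) ^ 2 ^ (p + 1) := by
        rw [hXdef, ← Finset.prod_mul_distrib]
        exact Finset.prod_congr rfl (fun k _ => by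
          rw [← pow_add, ← two_mul, ← pow_succ'])
      rw [← hX, mul_pow]
      ring

lemma det_Pmat (m : ℕ) (γ : Fin m → ℂ) :
    (Pmat m γ).det = ∏ k, (1 - γ k) ^ 2 ^ (m - 1) := by
  have h := detProdMat m (fun k => !![1 - γ k, 1; 0, 1])
  simp only [Matrix.det_fin_two_of, mul_one, mul_zero, sub_zero] at h
  exact h

/-- `det(H̃)` for `H̃ = ᵗP_m · H · P_m^∨` (where `∨` replaces each `γ_k` by `γ_k⁻¹`)
equals `∏_I (α-∏γ^i)(β-∏γ^i) / ((α-∏γ)^{2^m}(β-1)^{2^m})`; in particular `H̃`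
is invertible. -/
theorem detHtilde (m : ℕ) (α β : ℂ) (γ : Fin m → ℂ)
    (hγ0 : ∀ k, γ k ≠ 0) (hγ1 : ∀ k, γ k ≠ 1)
    (hα : ∀ i : Fin m → Fin 2, α ≠ ∏ k, γ k ^ (i k : ℕ))
    (hβ : ∀ i : Fin m → Fin 2, β ≠ ∏ k, γ k ^ (i k : ℕ)) :
    ((Pmat m γ)ᵀ * Matrix.diagonal (Hentry m α β γ) * Pmat m (fun k => (γ k)⁻¹)).det
        = (∏ I : Fin m → Fin 2,
            (α - ∏ k, γ k ^ (I k : ℕ)) * (β - ∏ k, γ k ^ (I k : ℕ))) /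
          ((α - ∏ k, γ k) ^ 2 ^ m * (β - 1) ^ 2 ^ m) ∧
      IsUnit ((Pmat m γ)ᵀ * Matrix.diagonal (Hentry m α β γ) *
        Pmat m (fun k => (γ k)⁻¹)) := by
  have hne1 : ∀ k, γ k - 1 ≠ 0 := fun k => sub_ne_zero.mpr (hγ1 k)
  have hαγ : α - ∏ k, γ k ≠ 0 := by
    have h := hα (fun _ => 1)
    simp only [Fin.val_one, pow_one] at h
    exact sub_ne_zero.mpr h
  have hβ1 : β - 1 ≠ 0 := by
    have h := hβ (fun _ => 0)
    simp only [Fin.val_zero, pow_zero, Finset.prod_const_one] at h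
    exact sub_ne_zero.mpr h
  have hdet : ((Pmat m γ)ᵀ * Matrix.diagonal (Hentry m α β γ) *
        Pmat m (fun k => (γ k)⁻¹)).det
      = (∏ I : Fin m → Fin 2,
            (α - ∏ k, γ k ^ (I k : ℕ)) * (β - ∏ k, γ k ^ (I k : ℕ))) /
          ((α - ∏ k, γ k) ^ 2 ^ m * (β - 1) ^ 2 ^ m) := by
    rw [Matrix.det_mul, Matrix.det_mul, Matrix.det_transpose, Matrix.det_diagonal,
      det_Pmat, det_Pmat]
    -- compute the product of the diagonal entries
    have hprod : (∏ I : Fin m → Fin 2, Hentry m α β γ I)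
        = (∏ k, (-(γ k) / (γ k - 1) ^ 2) ^ 2 ^ (m - 1)) *
          ((∏ I : Fin m → Fin 2,
            (α - ∏ k, γ k ^ (I k : ℕ)) * (β - ∏ k, γ k ^ (I k : ℕ))) /
            ((α - ∏ k, γ k) ^ 2 ^ m * (β - 1) ^ 2 ^ m)) := by
      unfold Hentry
      rw [Finset.prod_mul_distrib]
      rw [prodPi m (fun k i => (-1 : ℂ) ^ (i : ℕ) * γ k ^ (1 - (i : ℕ)) / (γ k - 1))]
      congr 1
      · apply Finset.prod_congr rfl
        intro k _
        congr 1
        simp only [Fin.val_zero, Fin.val_one, pow_zero, pow_one, one_mul,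
          Nat.sub_zero, Nat.sub_self]
        field_simp
      · rw [Finset.prod_div_distrib, Finset.prod_const, Finset.card_univ,
          Fintype.card_pi]
        simp only [Fintype.card_fin, Finset.prod_const, Finset.card_univ]
        rw [mul_pow]
    rw [hprod]
    have hone : (∏ k, (1 - γ k) ^ 2 ^ (m - 1)) *
        (∏ k, (-(γ k) / (γ k - 1) ^ 2) ^ 2 ^ (m - 1)) *
        (∏ k, (1 - (γ k)⁻¹) ^ 2 ^ (m - 1)) = 1 := by
      rw [← Finset.prod_mul_distrib, ← Finset.prod_mul_distrib]
      apply Finset.prod_eq_one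
      intro k _
      rw [← mul_pow, ← mul_pow]
      have h0 := hγ0 k
      have h1 := hne1 k
      have : (1 - γ k) * (-(γ k) / (γ k - 1) ^ 2) * (1 - (γ k)⁻¹) = 1 := by
        field_simp
        ring
      rw [this, one_pow]
    calc (∏ k, (1 - γ k) ^ 2 ^ (m - 1)) *
          ((∏ k, (-(γ k) / (γ k - 1) ^ 2) ^ 2 ^ (m - 1)) *
            ((∏ I : Fin m → Fin 2,
              (α - ∏ k, γ k ^ (I k : ℕ)) * (β - ∏ k, γ k ^ (I k : ℕ))) /
              ((α - ∏ k, γ k) ^ 2 ^ m * (β - 1) ^ 2 ^ m))) *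
          (∏ k, (1 - (γ k)⁻¹) ^ 2 ^ (m - 1))
        = ((∏ k, (1 - γ k) ^ 2 ^ (m - 1)) *
            (∏ k, (-(γ k) / (γ k - 1) ^ 2) ^ 2 ^ (m - 1)) *
            (∏ k, (1 - (γ k)⁻¹) ^ 2 ^ (m - 1))) *
            ((∏ I : Fin m → Fin 2,
              (α - ∏ k, γ k ^ (I k : ℕ)) * (β - ∏ k, γ k ^ (I k : ℕ))) /
              ((α - ∏ k, γ k) ^ 2 ^ m * (β - 1) ^ 2 ^ m)) := by ring
      _ = _ := by rw [hone, one_mul]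
  refine ⟨hdet, ?_⟩
  rw [Matrix.isUnit_iff_isUnit_det, hdet]
  apply isUnit_iff_ne_zero.mpr
  apply div_ne_zero
  · exact Finset.prod_ne_zero_iff.mpr fun I _ =>
      mul_ne_zero (sub_ne_zero.mpr (hα I)) (sub_ne_zero.mpr (hβ I))
  · exact mul_ne_zero (pow_ne_zero _ hαγ) (pow_ne_zero _ hβ1)
end

section
/- For the Kronecker-product diagonal matrices M_k = E_2 ⊗ ⋯ ⊗ G_k ⊗ ⋯ ⊗ E_2 (G_k = diag(1, γ_k^{-1}) in the k-th slot) and the all-ones vector 𝟙 of size 2^m, the 2^m vectors M_1^{i_1} M_2^{i_2} ⋯ M_m^{i_m} 𝟙 for (i_1,…,i_m) ∈ {0,1}^m are linearly independent, provided γ_k ≠ 1 for all k. -/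
open Matrix

private lemma aux_sum {K : Type*} [Field K] (a : K) (ha : a - 1 ≠ 0) (i l : Fin 2) :
    ∑ j : Fin 2, a ^ ((j : ℕ) * (i : ℕ)) * ((a - 1)⁻¹ • ![![a, -1], ![-1, 1]]) j l
      = if i = l then 1 else 0 := by
  rw [Fin.sum_univ_two]
  fin_cases i <;> fin_cases l <;>
    simp [Matrix.smul_apply] <;> field_simp <;> try ring

/-- The `2^m` vectors `M_1^{i_1} ⋯ M_m^{i_m} 𝟙`, where `M_k` is the diagonal matrix
with `(I,I)`-entry `γ_k^{-i_k}` and `𝟙` is the all-ones vector, are linearly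
independent when all `γ_k ≠ 0, 1`. -/
theorem lin_indep {K : Type*} [Field K] (m : ℕ) (γ : Fin m → K)
    (h0 : ∀ k, γ k ≠ 0) (h1 : ∀ k, γ k ≠ 1) :
    LinearIndependent K (fun I : Fin m → Fin 2 =>
      (List.ofFn fun k =>
          (Matrix.diagonal fun J : Fin m → Fin 2 => ((γ k)⁻¹) ^ (J k : ℕ)) ^ (I k : ℕ)).prod
        *ᵥ fun _ => (1 : K)) := by
  have hq1 : ∀ k, (γ k)⁻¹ - 1 ≠ 0 := by
    intro k h
    exact h1 k (inv_eq_one.mp (by linear_combination h))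
  set A : Matrix (Fin m → Fin 2) (Fin m → Fin 2) K :=
    Matrix.of (fun I J => ∏ k, (γ k)⁻¹ ^ ((J k : ℕ) * (I k : ℕ))) with hA
  have key : (fun I : Fin m → Fin 2 =>
      (List.ofFn fun k =>
          (Matrix.diagonal fun J : Fin m → Fin 2 => ((γ k)⁻¹) ^ (J k : ℕ)) ^ (I k : ℕ)).prod
        *ᵥ fun _ => (1 : K)) = fun I => A I := by
    funext I J
    have h2 : (List.ofFn fun k =>
          (Matrix.diagonal fun J : Fin m → Fin 2 => ((γ k)⁻¹) ^ (J k : ℕ)) ^ (I k : ℕ)).prod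
        = Matrix.diagonal (fun J : Fin m → Fin 2 => ∏ k, (γ k)⁻¹ ^ ((J k : ℕ) * (I k : ℕ))) := by
      simp_rw [Matrix.diagonal_pow, ← Matrix.diagonalRingHom_apply]
      have h3 := map_list_prod (Matrix.diagonalRingHom (Fin m → Fin 2) K)
        (List.ofFn fun k => (fun J : Fin m → Fin 2 => ((γ k)⁻¹) ^ (J k : ℕ)) ^ (I k : ℕ))
      rw [List.map_ofFn] at h3
      simp only [Function.comp_def] at h3
      rw [← h3, List.prod_ofFn]
      congr 1
      funext J
      simp [pow_mul, Finset.prod_apply]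
    rw [h2]
    simp [mulVec, dotProduct, Matrix.diagonal_apply, hA]
  rw [key, show (fun I => A I) = A.row from rfl, linearIndependent_rows_iff_isUnit]
  set c : Fin m → Fin 2 → Fin 2 → K :=
    fun k => ((γ k)⁻¹ - 1)⁻¹ • ![![(γ k)⁻¹, -1], ![-1, 1]] with hc
  set B : Matrix (Fin m → Fin 2) (Fin m → Fin 2) K :=
    Matrix.of (fun I J => ∏ k, c k (I k) (J k)) with hB
  have hAB : A * B = 1 := by
    ext I L
    rw [Matrix.mul_apply]
    have e1 : ∀ J : Fin m → Fin 2, A I J * B J L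
        = ∏ k, ((γ k)⁻¹ ^ ((J k : ℕ) * (I k : ℕ)) * c k (J k) (L k)) := by
      intro J
      rw [hA, hB]
      simp [Finset.prod_mul_distrib]
    simp_rw [e1]
    have e2 : ∑ J : Fin m → Fin 2, ∏ k, ((γ k)⁻¹ ^ ((J k : ℕ) * (I k : ℕ)) * c k (J k) (L k))
        = ∏ k, ∑ j : Fin 2, ((γ k)⁻¹ ^ ((j : ℕ) * (I k : ℕ)) * c k j (L k)) := by
      rw [Finset.prod_univ_sum]
      rw [← Fintype.piFinset_univ]
    rw [e2]
    have e3 : ∀ k, ∑ j : Fin 2, ((γ k)⁻¹ ^ ((j : ℕ) * (I k : ℕ)) * c k j (L k))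
        = if I k = L k then 1 else 0 := fun k => aux_sum _ (hq1 k) (I k) (L k)
    simp_rw [e3]
    rw [Matrix.one_apply]
    by_cases h : I = L
    · simp [h]
    · obtain ⟨k, hk⟩ := Function.ne_iff.mp h
      rw [if_neg h]
      exact Finset.prod_eq_zero (Finset.mem_univ k) (by simp [hk])
  have : Invertible A := invertibleOfRightInverse A B hAB
  exact isUnit_of_invertible A
end

section
/- The matrix whose columns are M_1^{i_1} ⋯ M_m^{i_m} 𝟙, ordered by the pure lexicographic order on (i_1,…,i_m) ∈ {0,1}^m, equals the Kronecker product of the m matrices [[1,1],[1,γ_k^{-1}]], and hence has determinant ∏_{k=1}^m (γ_k^{-1}-1)^{2^{m-1}}. -/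
open Matrix

lemma diag_list_prod {n α : Type*} [Fintype n] [DecidableEq n] [CommRing α] :
    ∀ (l : List (n → α)), (l.map Matrix.diagonal).prod = Matrix.diagonal l.prod := by
  intro l
  induction l with
  | nil =>
      show (1 : Matrix n n α) = Matrix.diagonal (1 : n → α)
      rw [← Matrix.diagonal_one]
      rfl
  | cons a l ih => simp [ih, Matrix.diagonal_mul_diagonal]

lemma Bmat_entry {K : Type*} [Field K] (m : ℕ) (γ : Fin m → K) (J I : Fin m → Fin 2) :
    (Matrix.of fun J I : Fin m → Fin 2 =>
      ((List.ofFn fun k =>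
        (Matrix.diagonal fun J' : Fin m → Fin 2 => ((γ k)⁻¹) ^ (J' k : ℕ)) ^ (I k : ℕ)).prod
      *ᵥ fun _ => (1 : K)) J) J I
      = ∏ k, (((γ k)⁻¹) ^ (J k : ℕ)) ^ (I k : ℕ) := by
  have h2 : (List.ofFn fun k =>
      (Matrix.diagonal fun J' : Fin m → Fin 2 => ((γ k)⁻¹) ^ (J' k : ℕ)) ^ (I k : ℕ))
      = List.map (Matrix.diagonal)
        (List.ofFn fun k => fun J' : Fin m → Fin 2 => (((γ k)⁻¹) ^ (J' k : ℕ)) ^ (I k : ℕ)) := by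
    rw [List.map_ofFn]
    congr 1
    funext k
    rw [Function.comp_apply, Matrix.diagonal_pow]
    rfl
  show ((List.ofFn fun k =>
        (Matrix.diagonal fun J' : Fin m → Fin 2 => ((γ k)⁻¹) ^ (J' k : ℕ)) ^ (I k : ℕ)).prod
      *ᵥ fun _ => (1 : K)) J = _
  rw [h2, diag_list_prod, Matrix.mulVec_diagonal, mul_one, List.prod_ofFn, Finset.prod_apply]

lemma det_kron_pi {K : Type*} [CommRing K] :
    ∀ (m : ℕ) (A : Fin m → Matrix (Fin 2) (Fin 2) K),
    (Matrix.of fun J I : Fin m → Fin 2 => ∏ k, A k (J k) (I k)).det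
      = ∏ k, (A k).det ^ 2 ^ (m - 1) := by
  intro m
  induction m with
  | zero =>
      intro A
      rw [Matrix.det_unique]
      simp
  | succ n ih =>
      intro A
      have hM : (Matrix.of fun J I : Fin (n+1) → Fin 2 => ∏ k, A k (J k) (I k))
          = (Matrix.kroneckerMap (· * ·) (A 0)
              (Matrix.of fun J I : Fin n → Fin 2 => ∏ k, A k.succ (J k) (I k))).submatrix
              (Fin.consEquiv (fun _ : Fin (n+1) => Fin 2)).symm (Fin.consEquiv (fun _ : Fin (n+1) => Fin 2)).symm := by
        ext J I
        simp [Matrix.kroneckerMap_apply, Fin.prod_univ_succ, Fin.consEquiv, Fin.tail]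
      rw [hM, Matrix.det_submatrix_equiv_self, Matrix.det_kronecker, ih]
      have hcard : Fintype.card (Fin n → Fin 2) = 2 ^ n := by simp
      rw [hcard, Fintype.card_fin, Fin.prod_univ_succ]
      rcases n with _ | n'
      · simp
      · rw [← Finset.prod_pow]
        congr 1
        apply Finset.prod_congr rfl
        intro k _
        rw [← pow_mul, ← pow_succ]
        norm_num

lemma cell_eq {K : Type*} [Field K] (x : K) (a b : Fin 2) :
    (x ^ (a : ℕ)) ^ (b : ℕ) = (!![1, 1; 1, x] : Matrix (Fin 2) (Fin 2) K) a b := by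
  fin_cases a <;> fin_cases b <;> simp

/-- The matrix whose `I`-th column is `M_1^{i_1} ⋯ M_m^{i_m} 𝟙`, where `M_k` is the
diagonal matrix with `(J,J)`-entry `γ_k^{-j_k}` and `𝟙` is the all-ones vector. -/
noncomputable def Bmat {K : Type*} [Field K] (m : ℕ) (γ : Fin m → K) :
    Matrix (Fin m → Fin 2) (Fin m → Fin 2) K :=
  Matrix.of fun J I =>
    ((List.ofFn fun k =>
        (Matrix.diagonal fun J' : Fin m → Fin 2 => ((γ k)⁻¹) ^ (J' k : ℕ)) ^ (I k : ℕ)).prod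
      *ᵥ fun _ => (1 : K)) J

/-- The matrix with columns `M_1^{i_1} ⋯ M_m^{i_m} 𝟙` equals the Kronecker product of
the matrices `[[1,1],[1,γ_k⁻¹]]` (realized entrywise on the index type `Fin m → Fin 2`),
and hence its determinant is `∏ k, (γ_k⁻¹-1)^(2^(m-1))`. -/
theorem Bmat_eq_kron {K : Type*} [Field K] (m : ℕ) (γ : Fin m → K)
    (h0 : ∀ k, γ k ≠ 0) :
    Bmat m γ = (Matrix.of fun J I : Fin m → Fin 2 =>
        ∏ k, (!![1, 1; 1, (γ k)⁻¹] : Matrix (Fin 2) (Fin 2) K) (J k) (I k)) ∧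
      (Bmat m γ).det = ∏ k, ((γ k)⁻¹ - 1) ^ 2 ^ (m - 1) := by
  have hB : Bmat m γ = (Matrix.of fun J I : Fin m → Fin 2 =>
      ∏ k, (!![1, 1; 1, (γ k)⁻¹] : Matrix (Fin 2) (Fin 2) K) (J k) (I k)) := by
    ext J I
    have h := Bmat_entry m γ J I
    calc Bmat m γ J I = ∏ k, (((γ k)⁻¹) ^ (J k : ℕ)) ^ (I k : ℕ) := h
      _ = _ := by
        apply Finset.prod_congr rfl
        intro k _
        exact cell_eq ((γ k)⁻¹) (J k) (I k)
  refine ⟨hB, ?_⟩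
  rw [hB, det_kron_pi]
  apply Finset.prod_congr rfl
  intro k _
  congr 1
  rw [Matrix.det_fin_two_of]
  ring
end

section
/- Let M_0 = E - c · 𝟙 · ᵗ𝟙 · H where H is an invertible diagonal matrix, 𝟙 the all-ones vector, c a scalar with c · (ᵗ𝟙 H 𝟙) = 1 - λ and λ ≠ 1, λ ≠ 0. Then 𝟙 is an eigenvector of M_0 with eigenvalue λ, and the eigenspace of M_0 with eigenvalue 1 is { w : ᵗ𝟙 H w = 0 }, which has dimension 2^m - 1. -/
open Matrix

/-- `M_0 = E - c · 𝟙 ᵗ𝟙 H` for an invertible diagonal `H` of size `2^m`. -/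
noncomputable def M0mat (m : ℕ) (c : ℂ) (d : Fin (2 ^ m) → ℂ) :
    Matrix (Fin (2 ^ m)) (Fin (2 ^ m)) ℂ :=
  1 - c • (Matrix.vecMulVec (fun _ => 1) (fun _ => 1) * Matrix.diagonal d)

lemma M0_mulVec (m : ℕ) (c : ℂ) (d : Fin (2 ^ m) → ℂ) (w : Fin (2 ^ m) → ℂ) :
    M0mat m c d *ᵥ w = w - (c * ∑ i, d i * w i) • (fun _ => (1 : ℂ)) := by
  funext i
  rw [M0mat, sub_mulVec, one_mulVec, smul_mulVec, ← mulVec_mulVec]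
  simp [mulVec, dotProduct, vecMulVec_apply, mulVec_diagonal, Finset.mul_sum]

lemma dot_eq (m : ℕ) (d w : Fin (2 ^ m) → ℂ) :
    dotProduct (fun _ => (1 : ℂ)) (Matrix.diagonal d *ᵥ w) = ∑ i, d i * w i := by
  simp [dotProduct, mulVec_diagonal]

/-- The linear functional `w ↦ ∑ i, d i * w i`. -/
noncomputable def dFun (m : ℕ) (d : Fin (2 ^ m) → ℂ) : Module.Dual ℂ (Fin (2 ^ m) → ℂ) where
  toFun w := ∑ i, d i * w i
  map_add' x y := by simp [mul_add, Finset.sum_add_distrib]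
  map_smul' a x := by simp [Finset.mul_sum, mul_left_comm]

/-- For `M_0 = E - c·𝟙·ᵗ𝟙·H` with `H` invertible diagonal, `ᵗ𝟙 H 𝟙 ≠ 0`,
`λ = 1 - c·(ᵗ𝟙 H 𝟙)`, `λ ≠ 0, 1`: `𝟙` is an eigenvector of `M_0` with eigenvalue `λ`,
the 1-eigenspace of `M_0` is `{w | ᵗ𝟙 H w = 0}`, and it has dimension `2^m - 1`. -/
theorem M0_eigen (m : ℕ) (c lam : ℂ) (d : Fin (2 ^ m) → ℂ) (hd : ∀ i, d i ≠ 0)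
    (hsum : dotProduct (fun _ => (1 : ℂ)) (Matrix.diagonal d *ᵥ fun _ => 1) ≠ 0)
    (hlam : lam = 1 - c * dotProduct (fun _ => (1 : ℂ))
      (Matrix.diagonal d *ᵥ fun _ => 1))
    (hlam1 : lam ≠ 1) (hlam0 : lam ≠ 0) :
    (M0mat m c d *ᵥ fun _ => (1 : ℂ)) = lam • (fun _ => (1 : ℂ)) ∧
      {w : Fin (2 ^ m) → ℂ | M0mat m c d *ᵥ w = w}
        = {w | dotProduct (fun _ => (1 : ℂ)) (Matrix.diagonal d *ᵥ w) = 0} ∧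
      Module.finrank ℂ (LinearMap.ker (M0mat m c d - 1).mulVecLin) = 2 ^ m - 1 := by
  have hc : c ≠ 0 := by
    intro h; apply hlam1; rw [hlam, h]; ring
  have hpos : 0 < 2 ^ m := Nat.pow_pos (n := m) (by norm_num)
  have key : ∀ w : Fin (2 ^ m) → ℂ, (M0mat m c d *ᵥ w = w) ↔ (∑ i, d i * w i) = 0 := by
    intro w
    rw [M0_mulVec]
    constructor
    · intro h
      have h2 := sub_eq_self.mp h
      have h3 := congrFun h2 ⟨0, hpos⟩
      simp only [Pi.smul_apply, smul_eq_mul, mul_one, Pi.zero_apply, mul_eq_zero] at h3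
      tauto
    · intro h; simp [h]
  refine ⟨?_, ?_, ?_⟩
  · rw [M0_mulVec]
    funext i
    rw [dot_eq] at hlam
    simp only [Pi.sub_apply, Pi.smul_apply, smul_eq_mul, mul_one, hlam]
  · ext w
    simp only [Set.mem_setOf_eq, key, dot_eq]
  · have hker : LinearMap.ker (M0mat m c d - 1).mulVecLin = LinearMap.ker (dFun m d) := by
      ext w
      simp only [LinearMap.mem_ker, mulVecLin_apply, sub_mulVec, one_mulVec, sub_eq_zero, key,
        dFun, LinearMap.coe_mk, AddHom.coe_mk]
    rw [hker]
    have hne : dFun m d ≠ 0 := by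
      intro h0
      apply hsum
      rw [dot_eq]
      have := congrFun (congrArg DFunLike.coe h0) (fun _ => (1 : ℂ))
      simpa [dFun] using this
    have h1 := Module.Dual.finrank_ker_add_one_of_ne_zero hne
    have h2 : Module.finrank ℂ (Fin (2 ^ m) → ℂ) = 2 ^ m := by simp
    omega
end

section
/- Irreducibility criterion: Let V = ℂ^n, let M_0, M_1, …, M_m be invertible linear maps on V, and H an invertible bilinear-form matrix such that ᵗM_i H M_i^∨ = H for all i (where ∨ denotes a fixed ring involution applied entrywise). Suppose (a) M_0 = E - e·ᵗv with image of E - M_0 spanned by a vector e; (b) the n vectors M_1^{i_1}⋯M_m^{i_m} e, (i_1,…,i_m) ∈ {0,1}^m with n = 2^m, are linearly independent; (c) the M_1,…,M_m pairwise commute; (d) ker(E - M_0) = { w : ᵗw H e^∨ = 0 }. Then the only subspaces of V invariant under all of M_0, M_1, …, M_m are 0 and V. -/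
open Matrix


variable {n : Type*} [Fintype n] [DecidableEq n]

lemma auxVecMulVec (a b x : n → ℂ) : vecMulVec a b *ᵥ x = (b ⬝ᵥ x) • a := by
  funext i
  simp [Matrix.mulVec, Matrix.vecMulVec_apply, dotProduct, Finset.sum_mul,
    mul_assoc, mul_comm, mul_left_comm, Finset.mul_sum]

lemma auxDP (P : Matrix n n ℂ) (u z : n → ℂ) : (P *ᵥ u) ⬝ᵥ z = u ⬝ᵥ (Pᵀ *ᵥ z) := by
  rw [dotProduct_comm, dotProduct_mulVec, ← vecMul_transpose, transpose_transpose,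
    dotProduct_comm]

lemma auxPreserve (W : Submodule ℂ (n → ℂ)) (L : List (Matrix n n ℂ))
    (h : ∀ A ∈ L, ∀ w ∈ W, A *ᵥ w ∈ W) : ∀ w ∈ W, L.prod *ᵥ w ∈ W := by
  induction L with
  | nil => simpa using fun w hw => hw
  | cons A L ih =>
    intro w hw
    rw [List.prod_cons, ← Matrix.mulVec_mulVec]
    exact h A (by simp) _ (ih (fun B hB => h B (by simp [hB])) w hw)

lemma auxPowPreserve (W : Submodule ℂ (n → ℂ)) (A : Matrix n n ℂ)
    (h : ∀ w ∈ W, A *ᵥ w ∈ W) (k : ℕ) : ∀ w ∈ W, A ^ k *ᵥ w ∈ W := by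
  induction k with
  | zero => simpa using fun w hw => hw
  | succ k ih =>
    intro w hw
    rw [pow_succ, ← Matrix.mulVec_mulVec]
    exact ih _ (h w hw)

lemma auxFormMul (H : Matrix n n ℂ) (σ : ℂ →+* ℂ) (A B : Matrix n n ℂ)
    (hA : Aᵀ * H * A.map σ = H) (hB : Bᵀ * H * B.map σ = H) :
    (A * B)ᵀ * H * (A * B).map σ = H := by
  rw [Matrix.transpose_mul, Matrix.map_mul]
  calc Bᵀ * Aᵀ * H * (A.map σ * B.map σ) = Bᵀ * (Aᵀ * H * A.map σ) * B.map σ := by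
          simp only [Matrix.mul_assoc]
    _ = H := by rw [hA, hB]

lemma auxFormPow (H : Matrix n n ℂ) (σ : ℂ →+* ℂ) (A : Matrix n n ℂ)
    (hA : Aᵀ * H * A.map σ = H) (k : ℕ) : (A ^ k)ᵀ * H * (A ^ k).map σ = H := by
  induction k with
  | zero => simp
  | succ k ih => rw [pow_succ]; exact auxFormMul H σ _ _ ih hA

lemma auxFormProd (H : Matrix n n ℂ) (σ : ℂ →+* ℂ) (L : List (Matrix n n ℂ))
    (h : ∀ A ∈ L, Aᵀ * H * A.map σ = H) : L.prodᵀ * H * L.prod.map σ = H := by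
  induction L with
  | nil => simp
  | cons A L ih =>
    rw [List.prod_cons]
    exact auxFormMul H σ _ _ (h A (by simp)) (ih fun B hB => h B (by simp [hB]))

lemma auxSurj (W : Submodule ℂ (n → ℂ)) (A : Matrix n n ℂ) (hA : IsUnit A)
    (h : ∀ w ∈ W, A *ᵥ w ∈ W) : ∀ w ∈ W, ∃ u ∈ W, A *ᵥ u = w := by
  have hinj : Function.Injective A.mulVec := Matrix.mulVec_injective_iff_isUnit.mpr hA
  let f : W →ₗ[ℂ] W := A.mulVecLin.restrict (fun x hx => h x hx)
  have hfi : Function.Injective f := by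
    intro a b hab
    exact Subtype.ext (hinj (congrArg Subtype.val hab))
  have hfs := LinearMap.injective_iff_surjective.mp hfi
  intro w hw
  obtain ⟨⟨u, hu⟩, hu2⟩ := hfs ⟨w, hw⟩
  exact ⟨u, hu, congrArg Subtype.val hu2⟩

lemma auxConjLI {ι : Type*} [Fintype ι] (σ : ℂ →+* ℂ) (hσ : ∀ x, σ (σ x) = x)
    (f : ι → n → ℂ) (hf : LinearIndependent ℂ f) :
    LinearIndependent ℂ (fun I => fun i => σ (f I i)) := by
  rw [Fintype.linearIndependent_iff] at hf ⊢
  intro g hg I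
  have h2 : ∑ J, σ (g J) • f J = 0 := by
    funext i
    have := congrFun hg i
    simp only [Finset.sum_apply, Pi.smul_apply, smul_eq_mul, Pi.zero_apply] at this ⊢
    have := congrArg σ this
    simpa [map_sum, hσ] using this
  have := hf _ h2 I
  calc g I = σ (σ (g I)) := (hσ _).symm
    _ = 0 := by rw [this, map_zero]


/-- Irreducibility criterion abstracting the monodromy of Lauricella's `F_C`:
with `V = ℂ^(2^m)`, invertible matrices `M_0, M_1, …, M_m` preserving an invertible
form `H` (w.r.t. an entrywise involution `σ`), `M_0 = E - e·ᵗv`, the `2^m` vectors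
`M_1^{i_1}⋯M_m^{i_m}e` linearly independent, `M_1,…,M_m` commuting, and the
1-eigenspace of `M_0` equal to `{w | ᵗw H e^∨ = 0}`, every subspace invariant
under all the `M_i` is `0` or `V`. -/
theorem irreducibility (m : ℕ) (σ : ℂ →+* ℂ) (hσ : ∀ x, σ (σ x) = x)
    (M0 : Matrix (Fin m → Fin 2) (Fin m → Fin 2) ℂ)
    (M : Fin m → Matrix (Fin m → Fin 2) (Fin m → Fin 2) ℂ)
    (H : Matrix (Fin m → Fin 2) (Fin m → Fin 2) ℂ)
    (e v : (Fin m → Fin 2) → ℂ)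
    (hM0 : IsUnit M0) (hMk : ∀ k, IsUnit (M k)) (hH : IsUnit H)
    (hinv0 : M0ᵀ * H * M0.map σ = H)
    (hinvk : ∀ k, (M k)ᵀ * H * (M k).map σ = H)
    (ha : M0 = 1 - Matrix.vecMulVec e v)
    (hb : LinearIndependent ℂ (fun I : Fin m → Fin 2 =>
      (List.ofFn fun k => (M k) ^ (I k : ℕ)).prod *ᵥ e))
    (hc : ∀ k l, M k * M l = M l * M k)
    (hd : {w : (Fin m → Fin 2) → ℂ | M0 *ᵥ w = w}
      = {w | dotProduct w (H *ᵥ fun i => σ (e i)) = 0}) :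
    ∀ W : Submodule ℂ ((Fin m → Fin 2) → ℂ),
      (∀ w ∈ W, M0 *ᵥ w ∈ W) → (∀ k, ∀ w ∈ W, M k *ᵥ w ∈ W) →
        W = ⊥ ∨ W = ⊤ := by
  intro W hW0 hWk
  set P : (Fin m → Fin 2) → Matrix (Fin m → Fin 2) (Fin m → Fin 2) ℂ :=
    fun I => (List.ofFn fun k => (M k) ^ (I k : ℕ)).prod with hP
  have hPpre : ∀ I, ∀ w ∈ W, P I *ᵥ w ∈ W := by
    intro I
    apply auxPreserve
    intro A hA
    obtain ⟨k, rfl⟩ := List.mem_ofFn.mp hA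
    exact auxPowPreserve W (M k) (hWk k) _
  have hPunit : ∀ I, IsUnit (P I) := by
    intro I
    apply List.prod_isUnit
    intro A hA
    obtain ⟨k, rfl⟩ := List.mem_ofFn.mp hA
    exact (hMk k).pow _
  have hPform : ∀ I, (P I)ᵀ * H * (P I).map σ = H := by
    intro I
    apply auxFormProd
    intro A hA
    obtain ⟨k, rfl⟩ := List.mem_ofFn.mp hA
    exact auxFormPow H σ _ (hinvk k) _
  have hM0w : ∀ w, M0 *ᵥ w = w - (v ⬝ᵥ w) • e := by
    intro w
    rw [ha, Matrix.sub_mulVec, Matrix.one_mulVec, auxVecMulVec]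
  have hcard : Fintype.card (Fin m → Fin 2) = Module.finrank ℂ ((Fin m → Fin 2) → ℂ) :=
    (Module.finrank_fintype_fun_eq_card ℂ).symm
  by_cases hex : ∃ w ∈ W, v ⬝ᵥ w ≠ 0
  · right
    obtain ⟨w, hw, hvw⟩ := hex
    have he : e ∈ W := by
      have he2 : e = (v ⬝ᵥ w)⁻¹ • (w - M0 *ᵥ w) := by
        rw [hM0w, sub_sub_cancel, smul_smul, inv_mul_cancel₀ hvw, one_smul]
      rw [he2]
      exact W.smul_mem _ (W.sub_mem hw (hW0 w hw))
    have hspan := hb.span_eq_top_of_card_eq_finrank hcard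
    rw [eq_top_iff, ← hspan]
    apply Submodule.span_le.mpr
    rintro x ⟨I, rfl⟩
    exact hPpre I e he
  · left
    push_neg at hex
    have hfix : ∀ w ∈ W, w ⬝ᵥ (H *ᵥ fun i => σ (e i)) = 0 := by
      intro w hw
      have hfm : M0 *ᵥ w = w := by rw [hM0w, hex w hw, zero_smul, sub_zero]
      exact (Set.ext_iff.mp hd w).mp hfm
    have hkey : ∀ w ∈ W, ∀ I, w ⬝ᵥ (H *ᵥ fun i => σ ((P I *ᵥ e) i)) = 0 := by
      intro w hw I
      obtain ⟨u, hu, huw⟩ := auxSurj W (P I) (hPunit I) (hPpre I) w hw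
      have hmap : (fun i => σ ((P I *ᵥ e) i)) = (P I).map σ *ᵥ fun i => σ (e i) := by
        funext i
        exact (RingHom.map_mulVec σ (P I) e i).trans rfl
      rw [hmap, ← huw, Matrix.mulVec_mulVec, auxDP, Matrix.mulVec_mulVec,
        ← Matrix.mul_assoc, hPform I]
      exact hfix u hu
    have hli2 := auxConjLI σ hσ _ hb
    have hHinj : Function.Injective H.mulVec := Matrix.mulVec_injective_iff_isUnit.mpr hH
    have hli3 : LinearIndependent ℂ (fun I => H *ᵥ fun i => σ ((P I *ᵥ e) i)) := by
      have h4 := hli2.map' H.mulVecLin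
        (LinearMap.ker_eq_bot.mpr (fun a b hab => hHinj (by simpa using hab)))
      exact h4
    have hspan := hli3.span_eq_top_of_card_eq_finrank hcard
    rw [eq_bot_iff]
    intro w hw
    have hall : ∀ x, w ⬝ᵥ x = 0 := by
      intro x
      have hx : x ∈ Submodule.span ℂ
          (Set.range fun I => H *ᵥ fun i => σ ((P I *ᵥ e) i)) := by
        rw [hspan]; trivial
      induction hx using Submodule.span_induction with
      | mem x hx => obtain ⟨I, rfl⟩ := hx; exact hkey w hw I
      | zero => simp
      | add x y _ _ hx hy => rw [dotProduct_add, hx, hy, add_zero]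
      | smul a x _ hx => rw [dotProduct_smul, hx, smul_zero]
    have hw0 : w = 0 := by
      funext j
      have h5 := hall (Pi.single j 1)
      rwa [dotProduct_single, mul_one] at h5
    simp [hw0]
end

section
/- A simplified irreducibility criterion over ℂ: let n ≥ 1, e ∈ ℂ^n nonzero, M_0 = E - e·ᵗv with ᵗv·e ≠ 0 (so the 1-eigenspace of M_0 is the hyperplane ker ᵗv and e ∉ ker ᵗv), and let M_1,…,M_m be commuting invertible matrices such that the vectors M_1^{i_1}⋯M_m^{i_m}e, (i_1,…,i_m) ∈ {0,1}^m, span ℂ^n, and such that each M_k preserves a nondegenerate pairing B with B(M_i x, M_i y) = B(x, y) for all i = 0,…,m, and the 1-eigenspace of M_0 equals { w : B(w, e) = 0 }. Then any subspace W ⊆ ℂ^n invariant under all M_i is 0 or ℂ^n. -/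
open Matrix

/-- Simplified irreducibility criterion over `ℂ`: `M_0 = E - e·ᵗv` with `ᵗv·e ≠ 0`
and `e ≠ 0`; `M_1,…,M_m` commuting invertible matrices whose products
`M_1^{i_1}⋯M_m^{i_m}e` span `ℂ^n`; all `M_i` preserve a nondegenerate pairing `B`
(linear in the second argument up to a ring endomorphism `σ`, covering the bilinear
and sesquilinear cases); and the 1-eigenspace of `M_0` is `{w | B(w,e) = 0}`.
Then any invariant subspace is `0` or `ℂ^n`. -/
theorem irreducibility_simple (n m : ℕ) (hn : 1 ≤ n)
    (e v : Fin n → ℂ) (he : e ≠ 0)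
    (B : (Fin n → ℂ) → (Fin n → ℂ) → ℂ) (σ : ℂ →+* ℂ)
    (hBadd₁ : ∀ x y z, B (x + y) z = B x z + B y z)
    (hBadd₂ : ∀ x y z, B x (y + z) = B x y + B x z)
    (hBsmul₁ : ∀ (a : ℂ) x y, B (a • x) y = a * B x y)
    (hBsmul₂ : ∀ (a : ℂ) x y, B x (a • y) = σ a * B x y)
    (hBnd₁ : ∀ x, (∀ y, B x y = 0) → x = 0)
    (hBnd₂ : ∀ y, (∀ x, B x y = 0) → y = 0)
    (hve : dotProduct v e ≠ 0)
    (M : Fin m → Matrix (Fin n) (Fin n) ℂ)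
    (hMk : ∀ k, IsUnit (M k))
    (hc : ∀ k l, M k * M l = M l * M k)
    (hspan : Submodule.span ℂ (Set.range fun I : Fin m → Fin 2 =>
      (List.ofFn fun k => (M k) ^ (I k : ℕ)).prod *ᵥ e) = ⊤)
    (hinv0 : ∀ x y, B ((1 - Matrix.vecMulVec e v) *ᵥ x) ((1 - Matrix.vecMulVec e v) *ᵥ y)
      = B x y)
    (hinvk : ∀ k, ∀ x y, B (M k *ᵥ x) (M k *ᵥ y) = B x y)
    (hd : {w : Fin n → ℂ | (1 - Matrix.vecMulVec e v) *ᵥ w = w} = {w | B w e = 0}) :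
    ∀ W : Submodule ℂ (Fin n → ℂ),
      (∀ w ∈ W, (1 - Matrix.vecMulVec e v) *ᵥ w ∈ W) →
      (∀ k, ∀ w ∈ W, M k *ᵥ w ∈ W) →
        W = ⊥ ∨ W = ⊤ := by
  intro W hW0 hWk
  have hvm : ∀ x : Fin n → ℂ, Matrix.vecMulVec e v *ᵥ x = (v ⬝ᵥ x) • e := by
    intro x; ext i
    simp [Matrix.mulVec, Matrix.vecMulVec_apply, dotProduct, Finset.sum_mul,
      mul_comm, mul_left_comm, Finset.mul_sum]
  have hM0 : ∀ x : Fin n → ℂ, (1 - Matrix.vecMulVec e v) *ᵥ x = x - (v ⬝ᵥ x) • e := by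
    intro x; rw [Matrix.sub_mulVec, Matrix.one_mulVec, hvm]
  -- the submonoid of "good" matrices
  let S : Submonoid (Matrix (Fin n) (Fin n) ℂ) :=
  { carrier := {A | IsUnit A ∧ (∀ x y, B (A *ᵥ x) (A *ᵥ y) = B x y) ∧ ∀ w ∈ W, A *ᵥ w ∈ W}
    mul_mem' := by
      rintro A A' ⟨hu, hb, hw⟩ ⟨hu', hb', hw'⟩
      refine ⟨hu.mul hu', fun x y => ?_, fun w hw2 => ?_⟩
      · rw [← Matrix.mulVec_mulVec, ← Matrix.mulVec_mulVec, hb, hb']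
      · rw [← Matrix.mulVec_mulVec]; exact hw _ (hw' _ hw2)
    one_mem' := ⟨isUnit_one, by simp [Matrix.one_mulVec], by simp [Matrix.one_mulVec]⟩ }
  have hMS : ∀ k, M k ∈ S := fun k => ⟨hMk k, hinvk k, hWk k⟩
  have hPS : ∀ I : Fin m → Fin 2, (List.ofFn fun k => (M k) ^ (I k : ℕ)).prod ∈ S := by
    intro I
    refine list_prod_mem ?_
    intro A hA
    obtain ⟨k, rfl⟩ := List.mem_ofFn.1 hA
    exact pow_mem (hMS k) _
  have hsurj : ∀ A, A ∈ S → ∀ w ∈ W, ∃ w' ∈ W, A *ᵥ w' = w := by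
    rintro A ⟨hu, hb, hwA⟩ w hw
    obtain ⟨N, hN⟩ := hu.exists_left_inv
    have hwA' : ∀ x ∈ W, (Matrix.mulVecLin A) x ∈ W := by
      intro x hx; simpa using hwA x hx
    let f : W →ₗ[ℂ] W := (Matrix.mulVecLin A).restrict hwA'
    have hinj : Function.Injective f := by
      intro x y hxy
      have h1 : A *ᵥ (x : Fin n → ℂ) = A *ᵥ (y : Fin n → ℂ) := by
        have := congrArg Subtype.val hxy
        simpa [f, LinearMap.restrict_coe_apply] using this
      have h2 : N *ᵥ (A *ᵥ (x : Fin n → ℂ)) = N *ᵥ (A *ᵥ (y : Fin n → ℂ)) := by rw [h1]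
      rw [Matrix.mulVec_mulVec, Matrix.mulVec_mulVec, hN, Matrix.one_mulVec,
        Matrix.one_mulVec] at h2
      exact Subtype.ext h2
    have hsur : Function.Surjective f := (LinearMap.injective_iff_surjective).mp hinj
    obtain ⟨w', hw'⟩ := hsur ⟨w, hw⟩
    refine ⟨(w' : Fin n → ℂ), w'.2, ?_⟩
    have := congrArg Subtype.val hw'
    simpa [f, LinearMap.restrict_coe_apply] using this
  by_cases hW : ∀ w ∈ W, v ⬝ᵥ w = 0
  · left
    rw [Submodule.eq_bot_iff]
    intro w hw
    have hBw0 : ∀ w' ∈ W, B w' e = 0 := by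
      intro w' hw'
      have hfix : (1 - Matrix.vecMulVec e v) *ᵥ w' = w' := by
        rw [hM0, hW w' hw', zero_smul, sub_zero]
      have : w' ∈ {w : Fin n → ℂ | (1 - Matrix.vecMulVec e v) *ᵥ w = w} := hfix
      rw [hd] at this
      exact this
    apply hBnd₁
    let g : (Fin n → ℂ) →ₛₗ[σ] ℂ :=
      { toFun := B w
        map_add' := fun y z => hBadd₂ w y z
        map_smul' := fun a y => by simpa using hBsmul₂ a w y }
    have hle : Submodule.span ℂ (Set.range fun I : Fin m → Fin 2 =>
        (List.ofFn fun k => (M k) ^ (I k : ℕ)).prod *ᵥ e) ≤ LinearMap.ker g := by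
      rw [Submodule.span_le]
      rintro _ ⟨I, rfl⟩
      obtain ⟨hu, hb, hwA⟩ := hPS I
      obtain ⟨w', hw'W, hw'⟩ := hsurj _ (hPS I) w hw
      simp only [LinearMap.mem_ker]
      show B w _ = 0
      rw [← hw', hb, hBw0 w' hw'W]
    rw [hspan, top_le_iff] at hle
    intro y
    have hy : y ∈ LinearMap.ker g := hle.symm ▸ Submodule.mem_top
    exact hy
  · right
    push_neg at hW
    obtain ⟨w, hwW, hvw⟩ := hW
    have h1 : w - (v ⬝ᵥ w) • e ∈ W := by rw [← hM0]; exact hW0 w hwW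
    have h2 : (v ⬝ᵥ w) • e ∈ W := by
      have := W.sub_mem hwW h1; simpa using this
    have he' : e ∈ W := by
      have := W.smul_mem (v ⬝ᵥ w)⁻¹ h2
      rwa [smul_smul, inv_mul_cancel₀ hvw, one_smul] at this
    rw [eq_top_iff, ← hspan, Submodule.span_le]
    rintro _ ⟨I, rfl⟩
    exact (hPS I).2.2 e he'
end

section
/- For I·I' ≠ (0,…,0), the (I,I')-entry of H̃ = ᵗP_m H P_m^∨ equals (αβ + (-1)^{|I·I'|} ∏_k γ_k^{i_k i'_k}) / ((α - ∏_k γ_k)(β-1)) · ∏_{k=1}^m (-γ_k)^{i'_k(1-i_k)} (1-γ_k)^{(1-i_k)(1-i'_k)}, where I·I' = (i_1 i'_1, …, i_m i'_m); for I·I' = (0,…,0) it equals ∏_{k=1}^m (-γ_k)^{i'_k}(1-γ_k)^{1-i_k-i'_k} · (α-1)/(α - ∏_k γ_k). In particular every entry of H̃ is a rational function whose denominator does not involve any factor γ_k - 1. -/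
open Matrix

/-- Auxiliary per-index weight. -/
noncomputable def Wf (g : ℂ) (i i' j : Fin 2) : ℂ :=
  (!![1 - g, 1; 0, 1] : Matrix (Fin 2) (Fin 2) ℂ) j i *
    ((-1 : ℂ) ^ (j : ℕ) * g ^ (1 - (j : ℕ)) / (g - 1)) *
    (!![1 - g⁻¹, 1; 0, 1] : Matrix (Fin 2) (Fin 2) ℂ) j i'

/-- Auxiliary per-index column sum with weight `g^(s·j)`. -/
noncomputable def sig (g : ℂ) (i i' : Fin 2) (s : ℕ) : ℂ :=
  ∑ j : Fin 2, Wf g i i' j * g ^ (s * (j : ℕ))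

lemma sig0 (g : ℂ) (hg0 : g ≠ 0) (hg1 : g ≠ 1) (i i' : Fin 2) :
    sig g i i' 0 = (-g) ^ ((i' : ℕ) * (1 - (i : ℕ))) *
      (1 - g) ^ ((1 - (i : ℕ)) * (1 - (i' : ℕ))) := by
  have h1 : g - 1 ≠ 0 := sub_ne_zero.mpr hg1
  fin_cases i <;> fin_cases i' <;>
    simp [sig, Wf, Fin.sum_univ_two] <;> field_simp <;> ring

lemma sig2 (g : ℂ) (hg0 : g ≠ 0) (hg1 : g ≠ 1) (i i' : Fin 2) :
    sig g i i' 2 = ((-1 : ℂ) ^ ((i : ℕ) * (i' : ℕ)) * g ^ ((i : ℕ) * (i' : ℕ))) *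
      ((-g) ^ ((i' : ℕ) * (1 - (i : ℕ))) * (1 - g) ^ ((1 - (i : ℕ)) * (1 - (i' : ℕ)))) := by
  have h1 : g - 1 ≠ 0 := sub_ne_zero.mpr hg1
  fin_cases i <;> fin_cases i' <;>
    simp [sig, Wf, Fin.sum_univ_two] <;> field_simp <;> ring

lemma sig1_one (g : ℂ) (hg0 : g ≠ 0) (hg1 : g ≠ 1) :
    sig g 1 1 1 = 0 := by
  have h1 : g - 1 ≠ 0 := sub_ne_zero.mpr hg1
  simp [sig, Wf, Fin.sum_univ_two]
  field_simp
  ring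

lemma sig1_zero (g : ℂ) (hg0 : g ≠ 0) (hg1 : g ≠ 1) (i i' : Fin 2)
    (h : (i : ℕ) * (i' : ℕ) = 0) :
    sig g i i' 1 = (-g) ^ (i' : ℕ) * (1 - g) ^ (1 - (i : ℕ) - (i' : ℕ)) := by
  have h1 : g - 1 ≠ 0 := sub_ne_zero.mpr hg1
  fin_cases i <;> fin_cases i' <;> simp_all [sig, Wf, Fin.sum_univ_two] <;>
    field_simp <;> ring

lemma sig0_zero (g : ℂ) (hg0 : g ≠ 0) (hg1 : g ≠ 1) (i i' : Fin 2)
    (h : (i : ℕ) * (i' : ℕ) = 0) :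
    sig g i i' 0 = (-g) ^ (i' : ℕ) * (1 - g) ^ (1 - (i : ℕ) - (i' : ℕ)) := by
  have h1 : g - 1 ≠ 0 := sub_ne_zero.mpr hg1
  fin_cases i <;> fin_cases i' <;> simp_all [sig, Wf, Fin.sum_univ_two] <;>
    field_simp <;> ring

lemma sig2_zero (g : ℂ) (hg0 : g ≠ 0) (hg1 : g ≠ 1) (i i' : Fin 2)
    (h : (i : ℕ) * (i' : ℕ) = 0) :
    sig g i i' 2 = (-g) ^ (i' : ℕ) * (1 - g) ^ (1 - (i : ℕ) - (i' : ℕ)) := by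
  have h1 : g - 1 ≠ 0 := sub_ne_zero.mpr hg1
  fin_cases i <;> fin_cases i' <;> simp_all [sig, Wf, Fin.sum_univ_two] <;>
    field_simp <;> ring

lemma entry_eq (m : ℕ) (α β : ℂ) (γ : Fin m → ℂ) (I I' : Fin m → Fin 2) :
    ((Pmat m γ)ᵀ * Matrix.diagonal (Hentry m α β γ) * Pmat m (fun k => (γ k)⁻¹)) I I'
    = (α * β * ∏ k, sig (γ k) (I k) (I' k) 0
        - (α + β) * ∏ k, sig (γ k) (I k) (I' k) 1
        + ∏ k, sig (γ k) (I k) (I' k) 2) / ((α - ∏ k, γ k) * (β - 1)) := by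
  rw [Matrix.mul_apply]
  simp only [Matrix.mul_diagonal, Matrix.transpose_apply]
  simp only [sig]
  rw [Fintype.prod_sum (f := fun k j => Wf (γ k) (I k) (I' k) j * γ k ^ (0 * (j : ℕ))),
      Fintype.prod_sum (f := fun k j => Wf (γ k) (I k) (I' k) j * γ k ^ (1 * (j : ℕ))),
      Fintype.prod_sum (f := fun k j => Wf (γ k) (I k) (I' k) j * γ k ^ (2 * (j : ℕ)))]
  rw [Finset.mul_sum, Finset.mul_sum, ← Finset.sum_sub_distrib, ← Finset.sum_add_distrib,
      Finset.sum_div]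
  refine Finset.sum_congr rfl fun J _ => ?_
  have h2 : ∀ k, γ k ^ (2 * (J k : ℕ)) = γ k ^ (J k : ℕ) * γ k ^ (J k : ℕ) := fun k => by
    rw [two_mul, pow_add]
  simp only [Pmat, Hentry, Wf, Matrix.of_apply, zero_mul, one_mul, pow_zero, mul_one, h2,
    Finset.prod_mul_distrib]
  ring

/-- The entries of `H̃ = ᵗP_m H P_m^∨`: if `I·I' ≠ 0` then
`H̃_{I,I'} = (αβ + (-1)^{|I·I'|} ∏ γ_k^{i_k i'_k})/((α-∏γ_k)(β-1)) ·
∏ (-γ_k)^{i'_k(1-i_k)}(1-γ_k)^{(1-i_k)(1-i'_k)}`; if `I·I' = 0` then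
`H̃_{I,I'} = ∏ (-γ_k)^{i'_k}(1-γ_k)^{1-i_k-i'_k} · (α-1)/(α-∏γ_k)`.
In particular no denominator involves a factor `γ_k - 1`. -/
theorem Htilde_entries (m : ℕ) (α β : ℂ) (γ : Fin m → ℂ)
    (hγ0 : ∀ k, γ k ≠ 0) (hγ1 : ∀ k, γ k ≠ 1)
    (hα : ∀ i : Fin m → Fin 2, α ≠ ∏ k, γ k ^ (i k : ℕ))
    (hβ : ∀ i : Fin m → Fin 2, β ≠ ∏ k, γ k ^ (i k : ℕ))
    (I I' : Fin m → Fin 2) :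
    (¬ (∀ k, (I k : ℕ) * (I' k : ℕ) = 0) →
      ((Pmat m γ)ᵀ * Matrix.diagonal (Hentry m α β γ) *
          Pmat m (fun k => (γ k)⁻¹)) I I'
        = (α * β + (-1 : ℂ) ^ (∑ k, (I k : ℕ) * (I' k : ℕ)) *
              ∏ k, γ k ^ ((I k : ℕ) * (I' k : ℕ))) /
            ((α - ∏ k, γ k) * (β - 1)) *
            ∏ k, (-γ k) ^ ((I' k : ℕ) * (1 - (I k : ℕ))) *
              (1 - γ k) ^ ((1 - (I k : ℕ)) * (1 - (I' k : ℕ)))) ∧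
    ((∀ k, (I k : ℕ) * (I' k : ℕ) = 0) →
      ((Pmat m γ)ᵀ * Matrix.diagonal (Hentry m α β γ) *
          Pmat m (fun k => (γ k)⁻¹)) I I'
        = (∏ k, (-γ k) ^ (I' k : ℕ) * (1 - γ k) ^ (1 - (I k : ℕ) - (I' k : ℕ))) *
            ((α - 1) / (α - ∏ k, γ k))) := by
  have hβ1 : (β - 1) ≠ 0 := sub_ne_zero.mpr (by simpa using hβ (fun _ => 0))
  have hαγ : (α - ∏ k, γ k) ≠ 0 := sub_ne_zero.mpr (by simpa using hα (fun _ => 1))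
  constructor
  · intro h
    rw [entry_eq m α β γ I I']
    obtain ⟨k0, hk0⟩ := not_forall.mp h
    have b1 : (I k0 : ℕ) < 2 := (I k0).is_lt
    have b2 : (I' k0 : ℕ) < 2 := (I' k0).is_lt
    obtain ⟨ha, hb⟩ := Nat.mul_ne_zero_iff.mp hk0
    have hI : I k0 = 1 := Fin.ext (by omega)
    have hI' : I' k0 = 1 := Fin.ext (by omega)
    have hs1 : ∏ k, sig (γ k) (I k) (I' k) 1 = 0 :=
      Finset.prod_eq_zero (Finset.mem_univ k0)
        (by rw [hI, hI']; exact sig1_one _ (hγ0 k0) (hγ1 k0))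
    rw [hs1, Finset.prod_congr rfl (fun k _ => sig0 (γ k) (hγ0 k) (hγ1 k) (I k) (I' k)),
        Finset.prod_congr rfl (fun k _ => sig2 (γ k) (hγ0 k) (hγ1 k) (I k) (I' k)),
        ]
    simp only [Finset.prod_mul_distrib, Finset.prod_pow_eq_pow_sum]
    ring
  · intro h
    rw [entry_eq m α β γ I I']
    rw [Finset.prod_congr rfl (fun k _ => sig0_zero (γ k) (hγ0 k) (hγ1 k) (I k) (I' k) (h k)),
        Finset.prod_congr rfl (fun k _ => sig1_zero (γ k) (hγ0 k) (hγ1 k) (I k) (I' k) (h k)),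
        Finset.prod_congr rfl (fun k _ => sig2_zero (γ k) (hγ0 k) (hγ1 k) (I k) (I' k) (h k))]
    field_simp
    ring
end
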